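/- (Abstract Aubin–Nitsche duality) Let $V$ be a real inner product space with an additional norm $\|\cdot\|_h$, $a: V \times V \to \mathbb{R}$ bilinear with $|a(w,z)| \le \|w\|_h \|z\|_h$. Suppose $e \in V$, and for the dual solution $w \in V$ one has $a(e, w) = \langle e, e\rangle$ and $a(e, w_h) = 0$ for all $w_h$ in a subspace $V_h$. If $\|e\|_h \le C h^\delta A$ and $\inf_{w_h \in V_h}\|w - w_h\|_h \le C h^\delta \sqrt{\langle e,e\rangle}$, then $\sqrt{\langle e, e\rangle} \le C^2 h^{2\delta} A$. -/

import Mathlib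

open scoped RealInnerProductSpace

/-- abstract Aubin–Nitsche duality argument. Let `e = u - u_h` be the
error, `w` the dual solution with `a(e,w) = ⟨e,e⟩` and `a(e,w_h) = 0` for `w_h ∈ V_h`.
If `a` is continuous with respect to the discrete norm `Nh`, `Nh e ≤ C h^δ A`, and
the best approximation of `w` in `V_h` satisfies
`inf_{w_h ∈ V_h} Nh (w - w_h) ≤ C h^δ √⟨e,e⟩`, then `√⟨e,e⟩ ≤ C² h^{2δ} A`. -/
theorem aubin_nitsche_abstract
    {V : Type*} [NormedAddCommGroup V] [InnerProductSpace ℝ V]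
    (Nh : V → ℝ) (hNh : ∀ v, 0 ≤ Nh v)
    (a : V →ₗ[ℝ] V →ₗ[ℝ] ℝ)
    (hcont : ∀ w z : V, |a w z| ≤ Nh w * Nh z)
    (Vh : Submodule ℝ V) (e w : V) (C h δ A : ℝ)
    (hC : 0 ≤ C) (hh : 0 < h) (hA : 0 ≤ A)
    (hdual : a e w = ⟪e, e⟫)
    (horth : ∀ wh ∈ Vh, a e wh = 0)
    (he : Nh e ≤ C * h ^ δ * A)
    (happrox : sInf {r : ℝ | ∃ wh ∈ Vh, r = Nh (w - wh)}
        ≤ C * h ^ δ * Real.sqrt ⟪e, e⟫) :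
    Real.sqrt ⟪e, e⟫ ≤ C ^ 2 * h ^ (2 * δ) * A := by
  set S : Set ℝ := {r : ℝ | ∃ wh ∈ Vh, r = Nh (w - wh)} with hS
  have hne : S.Nonempty := ⟨Nh (w - 0), 0, Vh.zero_mem, rfl⟩
  have hSnn : ∀ r ∈ S, 0 ≤ r := by
    rintro r ⟨wh, _, rfl⟩; exact hNh _
  have hInf_nn : 0 ≤ sInf S := Real.sInf_nonneg hSnn
  have hee : (0:ℝ) ≤ ⟪e, e⟫ := real_inner_self_nonneg
  have hkey : ∀ r ∈ S, ⟪e, e⟫ ≤ Nh e * r := by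
    rintro r ⟨wh, hwh, rfl⟩
    have : a e (w - wh) = ⟪e, e⟫ := by
      rw [map_sub, hdual, horth wh hwh, sub_zero]
    calc ⟪e, e⟫ = a e (w - wh) := this.symm
      _ ≤ |a e (w - wh)| := le_abs_self _
      _ ≤ Nh e * Nh (w - wh) := hcont _ _
  have hmain : ⟪e, e⟫ ≤ Nh e * sInf S := by
    rcases eq_or_lt_of_le (hNh e) with h0 | h0
    · obtain ⟨r, hr⟩ := hne
      have := hkey r hr
      rw [← h0] at this
      simpa [← h0] using this.trans (le_of_eq (zero_mul r))
    · have : ⟪e, e⟫ / Nh e ≤ sInf S := by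
        apply le_csInf hne
        intro r hr
        exact (div_le_iff₀' h0).2 (hkey r hr)
      calc ⟪e, e⟫ = Nh e * (⟪e, e⟫ / Nh e) := by field_simp
        _ ≤ Nh e * sInf S := by
            exact mul_le_mul_of_nonneg_left this (hNh e)
  have hstep : ⟪e, e⟫ ≤ (C * h ^ δ * A) * (C * h ^ δ * Real.sqrt ⟪e, e⟫) :=
    hmain.trans (mul_le_mul he happrox hInf_nn
      (by positivity))
  set s := Real.sqrt ⟪e, e⟫ with hs
  have hs_nn : 0 ≤ s := Real.sqrt_nonneg _
  have hsq : s * s = ⟪e, e⟫ := Real.mul_self_sqrt hee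
  have hpow : h ^ (2 * δ) = h ^ δ * h ^ δ := by
    rw [two_mul, Real.rpow_add hh]
  have hK : (0:ℝ) ≤ C ^ 2 * h ^ (2 * δ) * A := by positivity
  rcases eq_or_lt_of_le hs_nn with h0 | h0
  · rw [← h0]; exact hK
  · have : s * s ≤ (C ^ 2 * h ^ (2 * δ) * A) * s := by
      rw [hsq, hpow]; calc ⟪e, e⟫ ≤ (C * h ^ δ * A) * (C * h ^ δ * s) := hstep
        _ = C ^ 2 * (h ^ δ * h ^ δ) * A * s := by ring
    exact le_of_mul_le_mul_right this h0
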